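/- Let V be a complex Hilbert space with inner product A, B a bounded sesquilinear form on V, T the solution operator A(Tf, v) = B(f,v), and suppose T u = λ⁻¹ u with ‖T − T_h‖ → 0 where T_h are operators with T_h u_h = λ_h⁻¹ u_h, λ_h → λ, ‖u_h‖ = 1, and ‖u_h − u‖_{H₁} ≤ ε₁ in a weaker norm ‖·‖_{H₁}, and T_h is uniformly bounded from ‖·‖_{H₁} to the strong norm ‖·‖_h. Then ‖u_h − u‖_h ≤ C( |λ| ‖(T − T_h) u‖_h + ‖λ_h u_h − λ u‖_{H₁} ). -/

import Mathlib

/-- The bootstrap estimate (4.16): writing `u_h - u = λ_h T_h u_h - λ T u`, the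
strong-norm eigenfunction error is controlled by the operator approximation error
on the exact eigenfunction plus the weak-norm eigenfunction error, using the
uniform `H₁ → h` boundedness of `T_h`. -/
theorem eigenfunction_bootstrap_estimate
    {V : Type*} [NormedAddCommGroup V] [NormedSpace ℂ V]
    (N1 : V → ℝ) (hN1 : ∀ v, 0 ≤ N1 v)
    (T Th : V →L[ℂ] V) (lam lamh : ℂ) (hlam : lam ≠ 0) (hlamh : lamh ≠ 0)
    (u uh : V) (hu : T u = lam⁻¹ • u) (huh : Th uh = lamh⁻¹ • uh)
    (hnorm : ‖uh‖ = 1)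
    (Cb : ℝ) (hCb : 0 < Cb) (hbdd : ∀ v, ‖Th v‖ ≤ Cb * N1 v) :
    ‖uh - u‖ ≤ max Cb 1 * (‖lam‖ * ‖(T - Th) u‖ + N1 (lamh • uh - lam • u)) := by
  have key : uh - u = Th (lamh • uh - lam • u) - lam • ((T - Th) u) := by
    simp only [map_sub, map_smul, huh, hu, ContinuousLinearMap.sub_apply, smul_sub,
      smul_smul, mul_inv_cancel₀ hlamh, mul_inv_cancel₀ hlam, one_smul]
    abel
  calc ‖uh - u‖ ≤ ‖Th (lamh • uh - lam • u)‖ + ‖lam • ((T - Th) u)‖ := by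
        rw [key]; exact norm_sub_le _ _
    _ ≤ Cb * N1 (lamh • uh - lam • u) + ‖lam‖ * ‖(T - Th) u‖ := by
        rw [norm_smul]; exact add_le_add (hbdd _) le_rfl
    _ ≤ max Cb 1 * N1 (lamh • uh - lam • u) + max Cb 1 * (‖lam‖ * ‖(T - Th) u‖) := by
        refine add_le_add (mul_le_mul_of_nonneg_right (le_max_left _ _) (hN1 _)) ?_
        exact le_mul_of_one_le_left (by positivity) (le_max_right _ _)
    _ = max Cb 1 * (‖lam‖ * ‖(T - Th) u‖ + N1 (lamh • uh - lam • u)) := by ring
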